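/- Assume r_0 >= 1. For every n >= 1, every integer alpha_n and every gamma_n in k_v, there exists a subset T of k_v with at most q^((r^3 - r^2)/2) elements (i.e. q raised to r times binomial(r,2)) such that: for every nonzero x in L with v(x) < N_v, with phi^k(x) != 0 and Exc(phi^k(x)) false for all 0 <= k <= n-1, and with v(phi^n(x)) = alpha_n and ac(phi^n(x)) = gamma_n, one has ac(x) in T. (The angular-component part of Lemma 2.13 of the paper: the bound is uniform in n.) -/

import Mathlib

open Filter Topology Finset

universe u

section Drinfeld

variable {L : Type u} [Field L] {k : Type*} [Field k]

/-- The integer value of the valuation `v` at `y` (junk value `0` at `y = 0`). -/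
noncomputable def vz (v : L → WithTop ℤ) (y : L) : ℤ := WithTop.untopD 0 (v y)

/-- `v : L → ℤ ∪ {∞}` is a normalized discrete valuation: `v 0 = ∞`, `v` is finite and
surjective onto `ℤ` on nonzero elements, `v (x * y) = v x + v y` and
`v (x + y) ≥ min (v x) (v y)`. -/
structure IsDVal (v : L → WithTop ℤ) : Prop where
  map_zero : v 0 = ⊤
  ne_top : ∀ x : L, x ≠ 0 → v x ≠ ⊤
  map_mul : ∀ x y : L, v (x * y) = v x + v y
  add_min : ∀ x y : L, min (v x) (v y) ≤ v (x + y)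
  surj : ∀ n : ℤ, ∃ x : L, v x = (n : WithTop ℤ)

/-- `res : L → k` restricted to the valuation ring of `v` is the quotient map onto the
residue field `k` of `v`. -/
structure IsResidue (v : L → WithTop ℤ) (res : L → k) : Prop where
  map_one : res 1 = 1
  map_add : ∀ x y : L, 0 ≤ v x → 0 ≤ v y → res (x + y) = res x + res y
  map_mul : ∀ x y : L, 0 ≤ v x → 0 ≤ v y → res (x * y) = res x * res y
  eq_zero_iff : ∀ x : L, 0 ≤ v x → (res x = 0 ↔ 0 < v x)
  surj : ∀ c : k, ∃ x : L, 0 ≤ v x ∧ res x = c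

/-- The angular component of `y` at `v`, with respect to the uniformizer `π` and the
residue map `res`: the residue of `y * π ^ (-v y)`. -/
noncomputable def ac (v : L → WithTop ℤ) (π : L) (res : L → k) (y : L) : k :=
  res (y * π ^ (-(vz v y)))

/-- The `F_q`-linear map `φ(x) = ∑_{i=r₀}^{r} a i * x^(q^i)`. -/
noncomputable def phiMap (q r₀ r : ℕ) (a : ℕ → L) (x : L) : L :=
  ∑ i ∈ Finset.Icc r₀ r, a i * x ^ q ^ i

/-- The set `P_v ⊆ ℚ` of possible exceptional valuations:
`(v(a i) - v(a j))/(q^j - q^i)` for `r₀ ≤ i < j ≤ r` with `a i ≠ 0 ≠ a j`, together with `0`. -/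
def Pset (q : ℕ) (v : L → WithTop ℤ) (r₀ r : ℕ) (a : ℕ → L) : Set ℚ :=
  {0} ∪ {α : ℚ | ∃ i j : ℕ, r₀ ≤ i ∧ i < j ∧ j ≤ r ∧ a i ≠ 0 ∧ a j ≠ 0 ∧
      α = ((vz v (a i) : ℚ) - (vz v (a j) : ℚ)) / ((q : ℚ) ^ j - (q : ℚ) ^ i)}

/-- The set `J(α)` of indices where `v(a i) + q^i * α` attains its minimum. -/
def Jset (q : ℕ) (v : L → WithTop ℤ) (r₀ r : ℕ) (a : ℕ → L) (α : ℚ) : Set ℕ :=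
  {i : ℕ | r₀ ≤ i ∧ i ≤ r ∧ a i ≠ 0 ∧
    ∀ j : ℕ, r₀ ≤ j → j ≤ r → a j ≠ 0 →
      (vz v (a i) : ℚ) + (q : ℚ) ^ i * α ≤ (vz v (a j) : ℚ) + (q : ℚ) ^ j * α}

open scoped Classical in
/-- The set `R_v(α) ⊆ k_v`: `1` together with the nonzero roots of
`∑_{i ∈ J(α)} ac(a i) * X^(q^i)`. -/
noncomputable def Rset (q : ℕ) (v : L → WithTop ℤ) (π : L) (res : L → k)
    (r₀ r : ℕ) (a : ℕ → L) (α : ℚ) : Set k :=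
  {1} ∪ {γ : k | γ ≠ 0 ∧
    ∑ i ∈ Finset.Icc r₀ r,
      (if i ∈ Jset q v r₀ r a α then ac v π res (a i) * γ ^ q ^ i else 0) = 0}

/-- The exceptional condition `Exc(y)`: `v y ∈ P_v` and `ac y ∈ R_v(v y)`. -/
def Exc (q : ℕ) (v : L → WithTop ℤ) (π : L) (res : L → k)
    (r₀ r : ℕ) (a : ℕ → L) (y : L) : Prop :=
  ((vz v y : ℚ) ∈ Pset q v r₀ r a) ∧ ac v π res y ∈ Rset q v π res r₀ r a ((vz v y : ℚ))

/-- The sequence `min(0, v(φⁿ x)) / q^(r n)` whose limit is minus the local height of `x`. -/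
noncomputable def locSeq (q r : ℕ) (v : L → WithTop ℤ) (φ : L → L) (x : L) (n : ℕ) : ℝ :=
  ((min 0 (vz v (φ^[n] x)) : ℤ) : ℝ) / (q : ℝ) ^ (r * n)


section AuxLemmas

variable {v : L → WithTop ℤ} {π : L} {res : L → k}

theorem IsDVal.vz_spec (hv : IsDVal v) {x : L} (hx : x ≠ 0) :
    v x = (vz v x : WithTop ℤ) := by
  obtain ⟨m, hm⟩ := WithTop.ne_top_iff_exists.mp (hv.ne_top x hx)
  rw [← hm]
  simp [vz, ← hm]

theorem IsDVal.pi_ne_zero (hv : IsDVal v) (hπ : v π = 1) : π ≠ 0 := by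
  intro h
  rw [h, hv.map_zero] at hπ
  exact (by simp : (⊤ : WithTop ℤ) ≠ 1) hπ

theorem IsDVal.v_one (hv : IsDVal v) : v (1 : L) = 0 := by
  have h := hv.map_mul 1 1
  rw [mul_one] at h
  obtain ⟨m, hm⟩ := WithTop.ne_top_iff_exists.mp (hv.ne_top 1 one_ne_zero)
  rw [← hm] at h ⊢
  have h2 : m = m + m := by exact_mod_cast h
  have h3 : m = 0 := by omega
  rw [h3]
  rfl

theorem IsDVal.vz_one (hv : IsDVal v) : vz v (1 : L) = 0 := by
  rw [vz, hv.v_one]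
  rfl

theorem IsDVal.vz_mul (hv : IsDVal v) {x y : L} (hx : x ≠ 0) (hy : y ≠ 0) :
    vz v (x * y) = vz v x + vz v y := by
  have h := hv.map_mul x y
  rw [hv.vz_spec (mul_ne_zero hx hy), hv.vz_spec hx, hv.vz_spec hy] at h
  exact_mod_cast h

theorem IsDVal.vz_pow (hv : IsDVal v) {x : L} (hx : x ≠ 0) (n : ℕ) :
    vz v (x ^ n) = (n : ℤ) * vz v x := by
  induction n with
  | zero => simp [hv.vz_one]
  | succ n ih =>
    rw [pow_succ, hv.vz_mul (pow_ne_zero n hx) hx, ih]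
    push_cast
    ring

theorem IsDVal.vz_inv (hv : IsDVal v) {x : L} (hx : x ≠ 0) :
    vz v x⁻¹ = -vz v x := by
  have h := hv.vz_mul hx (inv_ne_zero hx)
  rw [mul_inv_cancel₀ hx, hv.vz_one] at h
  omega

theorem IsDVal.vz_zpow (hv : IsDVal v) {x : L} (hx : x ≠ 0) (m : ℤ) :
    vz v (x ^ m) = m * vz v x := by
  cases m with
  | ofNat n =>
    rw [Int.ofNat_eq_coe, zpow_natCast, hv.vz_pow hx]
  | negSucc n =>
    rw [zpow_negSucc, hv.vz_inv (pow_ne_zero _ hx), hv.vz_pow hx, Int.negSucc_eq]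
    push_cast
    ring

theorem IsDVal.vz_pi (hv : IsDVal v) (hπ : v π = 1) : vz v π = 1 := by
  rw [vz, hπ]
  rfl

theorem IsDVal.v_zpow_pi (hv : IsDVal v) (hπ : v π = 1) (m : ℤ) :
    v (π ^ m) = (m : WithTop ℤ) := by
  have hπ0 := hv.pi_ne_zero hπ
  rw [hv.vz_spec (zpow_ne_zero m hπ0), hv.vz_zpow hπ0, hv.vz_pi hπ, mul_one]

theorem IsDVal.v_unit (hv : IsDVal v) (hπ : v π = 1) {x : L} (hx : x ≠ 0) :
    v (x * π ^ (-(vz v x))) = 0 := by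
  have hπ0 := hv.pi_ne_zero hπ
  have h2 : x * π ^ (-(vz v x)) ≠ 0 := mul_ne_zero hx (zpow_ne_zero _ hπ0)
  rw [hv.vz_spec h2, hv.vz_mul hx (zpow_ne_zero _ hπ0), hv.vz_zpow hπ0, hv.vz_pi hπ, mul_one]
  simp

theorem ac_ne_zero (hv : IsDVal v) (hπ : v π = 1) (hres : IsResidue v res) {x : L} (hx : x ≠ 0) :
    ac v π res x ≠ 0 := by
  have h0 := hv.v_unit hπ hx
  intro h
  have h1 := (hres.eq_zero_iff _ (le_of_eq h0.symm)).1 h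
  rw [h0] at h1
  exact lt_irrefl _ h1

theorem v_pow_nonneg (hv : IsDVal v) {x : L} (h : 0 ≤ v x) (n : ℕ) : 0 ≤ v (x ^ n) := by
  induction n with
  | zero => rw [pow_zero, hv.v_one]
  | succ n ih =>
    rw [pow_succ, hv.map_mul]
    exact add_nonneg ih h

theorem IsResidue.res_zero (hv : IsDVal v) (hres : IsResidue v res) : res (0 : L) = 0 := by
  have h0 : (0 : WithTop ℤ) ≤ v 0 := by rw [hv.map_zero]; exact le_top
  refine (hres.eq_zero_iff 0 h0).2 ?_
  rw [hv.map_zero]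
  exact WithTop.coe_lt_top 0

theorem IsResidue.res_pow (hres : IsResidue v res) (hv : IsDVal v) {x : L} (h : 0 ≤ v x) (n : ℕ) :
    res (x ^ n) = res x ^ n := by
  induction n with
  | zero => simpa using hres.map_one
  | succ n ih => rw [pow_succ, hres.map_mul _ _ (v_pow_nonneg hv h n) h, ih, pow_succ]

theorem v_sum_nonneg (hv : IsDVal v) {ι : Type*} {s : Finset ι} {f : ι → L}
    (h : ∀ i ∈ s, 0 ≤ v (f i)) : 0 ≤ v (∑ i ∈ s, f i) := by
  classical
  induction s using Finset.cons_induction with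
  | empty => rw [Finset.sum_empty, hv.map_zero]; exact le_top
  | cons a s ha ih =>
    rw [Finset.sum_cons]
    exact le_trans (le_min (h a (Finset.mem_cons_self a s))
      (ih fun i hi => h i (Finset.mem_cons.2 (Or.inr hi)))) (hv.add_min _ _)

theorem IsResidue.res_sum (hres : IsResidue v res) (hv : IsDVal v) {ι : Type*} {s : Finset ι}
    {f : ι → L} (h : ∀ i ∈ s, 0 ≤ v (f i)) :
    res (∑ i ∈ s, f i) = ∑ i ∈ s, res (f i) := by
  classical
  induction s using Finset.cons_induction with
  | empty => rw [Finset.sum_empty, Finset.sum_empty, hres.res_zero hv]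
  | cons a s ha ih =>
    rw [Finset.sum_cons, Finset.sum_cons,
      hres.map_add _ _ (h a (Finset.mem_cons_self a s))
        (v_sum_nonneg hv fun i hi => h i (Finset.mem_cons.2 (Or.inr hi))),
      ih fun i hi => h i (Finset.mem_cons.2 (Or.inr hi))]

theorem v_natCast_nonneg (hv : IsDVal v) (m : ℕ) : 0 ≤ v ((m : L)) := by
  induction m with
  | zero => rw [Nat.cast_zero, hv.map_zero]; exact le_top
  | succ m ih =>
    rw [Nat.cast_succ]
    exact le_trans (le_min ih (le_of_eq hv.v_one.symm)) (hv.add_min _ _)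

theorem IsResidue.res_natCast (hres : IsResidue v res) (hv : IsDVal v) (m : ℕ) :
    res ((m : L)) = (m : k) := by
  induction m with
  | zero => rw [Nat.cast_zero, Nat.cast_zero, hres.res_zero hv]
  | succ m ih =>
    rw [Nat.cast_succ, Nat.cast_succ,
      hres.map_add _ _ (v_natCast_nonneg hv m) (le_of_eq hv.v_one.symm), ih, hres.map_one]

theorem res_term (hv : IsDVal v) (hπ : v π = 1) (hres : IsResidue v res)
    {y x : L} (hy : y ≠ 0) (hx : x ≠ 0) (n : ℕ) :
    res (y * x ^ n * π ^ (-(vz v y + (n : ℤ) * vz v x))) =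
      ac v π res y * (ac v π res x) ^ n := by
  have hπ0 := hv.pi_ne_zero hπ
  have key : y * x ^ n * π ^ (-(vz v y + (n : ℤ) * vz v x)) =
      (y * π ^ (-(vz v y))) * ((x * π ^ (-(vz v x))) ^ n) := by
    rw [mul_pow, ← zpow_natCast (π ^ (-(vz v x))) n, ← zpow_mul,
        show -(vz v y + (n : ℤ) * vz v x) = (-(vz v y)) + (-(vz v x) * n) by ring,
        zpow_add₀ hπ0]
    ring
  rw [key, hres.map_mul _ _ (le_of_eq (hv.v_unit hπ hy).symm)
        (v_pow_nonneg hv (le_of_eq (hv.v_unit hπ hx).symm) n),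
      hres.res_pow hv (le_of_eq (hv.v_unit hπ hx).symm) n]
  rfl

end AuxLemmas

open scoped Classical in
/-- The set of indices `i ∈ [r₀, r]` with `a i ≠ 0` (with `r` inserted for nonemptiness). -/
noncomputable def suppIdx (r₀ r : ℕ) (a : ℕ → L) : Finset ℕ :=
  insert r ((Finset.Icc r₀ r).filter fun i => a i ≠ 0)

/-- The minimum of `v (a i) + q ^ i * β` over the support. -/
noncomputable def FminZ (q : ℕ) (v : L → WithTop ℤ) (r₀ r : ℕ) (a : ℕ → L) (β : ℤ) : ℤ :=
  (suppIdx r₀ r a).inf' ⟨r, Finset.mem_insert_self _ _⟩ fun i => vz v (a i) + (q : ℤ) ^ i * β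

open scoped Classical in
/-- `Jset` as a finset. -/
noncomputable def Jfin (q : ℕ) (v : L → WithTop ℤ) (r₀ r : ℕ) (a : ℕ → L) (α : ℚ) : Finset ℕ :=
  (Finset.Icc r₀ r).filter fun i => i ∈ Jset q v r₀ r a α

open scoped Classical in
/-- The one-step map on angular components. -/
noncomputable def psiMap (q : ℕ) (v : L → WithTop ℤ) (π : L) (res : L → k)
    (r₀ r : ℕ) (a : ℕ → L) (α : ℚ) (γ : k) : k :=
  ∑ i ∈ Finset.Icc r₀ r,
    (if i ∈ Jset q v r₀ r a α then ac v π res (a i) * γ ^ q ^ i else 0)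

theorem mem_suppIdx {r₀ r : ℕ} {a : ℕ → L} (har : a r = 1) (hr₀r : r₀ ≤ r) {i : ℕ} :
    i ∈ suppIdx r₀ r a ↔ r₀ ≤ i ∧ i ≤ r ∧ a i ≠ 0 := by
  classical
  simp only [suppIdx, Finset.mem_insert, Finset.mem_filter, Finset.mem_Icc]
  constructor
  · rintro (rfl | ⟨⟨h1, h2⟩, h3⟩)
    · exact ⟨hr₀r, le_refl _, by rw [har]; exact one_ne_zero⟩
    · exact ⟨h1, h2, h3⟩
  · rintro ⟨h1, h2, h3⟩
    exact Or.inr ⟨⟨h1, h2⟩, h3⟩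

theorem psiMap_eq_sum_Jfin {q : ℕ} {v : L → WithTop ℤ} {π : L} {res : L → k}
    {r₀ r : ℕ} {a : ℕ → L} (α : ℚ) (γ : k) :
    psiMap q v π res r₀ r a α γ =
      ∑ i ∈ Jfin q v r₀ r a α, ac v π res (a i) * γ ^ q ^ i := by
  classical
  rw [psiMap, Jfin]
  rw [Finset.sum_filter]

theorem mem_Jfin_int {q : ℕ} {v : L → WithTop ℤ} {r₀ r : ℕ} {a : ℕ → L}
    (hq1 : 1 ≤ q) (har : a r = 1) (hr₀r : r₀ ≤ r) (β : ℤ) {i : ℕ} :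
    i ∈ Jfin q v r₀ r a (β : ℚ) ↔
      i ∈ suppIdx r₀ r a ∧ vz v (a i) + (q : ℤ) ^ i * β = FminZ q v r₀ r a β := by
  classical
  constructor
  · intro hi
    rw [Jfin, Finset.mem_filter] at hi
    have hi2 := hi.2
    simp only [Jset, Set.mem_setOf_eq] at hi2
    obtain ⟨h1, h2, h3, h4⟩ := hi2
    have hiS : i ∈ suppIdx r₀ r a := (mem_suppIdx har hr₀r).2 ⟨h1, h2, h3⟩
    refine ⟨hiS, le_antisymm ?_ (Finset.inf'_le _ hiS)⟩
    obtain ⟨j, hj, hFj⟩ := Finset.exists_mem_eq_inf'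
      (⟨r, Finset.mem_insert_self _ _⟩ : (suppIdx r₀ r a).Nonempty)
      (fun i => vz v (a i) + (q : ℤ) ^ i * β)
    obtain ⟨hj1, hj2, hj3⟩ := (mem_suppIdx har hr₀r).1 hj
    have hq := h4 j hj1 hj2 hj3
    rw [FminZ, hFj]
    have : ((vz v (a i) + (q : ℤ) ^ i * β : ℤ) : ℚ) ≤ ((vz v (a j) + (q : ℤ) ^ j * β : ℤ) : ℚ) := by
      push_cast
      push_cast at hq
      linarith
    exact_mod_cast this
  · rintro ⟨hiS, hval⟩
    obtain ⟨h1, h2, h3⟩ := (mem_suppIdx har hr₀r).1 hiS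
    rw [Jfin, Finset.mem_filter]
    refine ⟨Finset.mem_Icc.2 ⟨h1, h2⟩, ?_⟩
    simp only [Jset, Set.mem_setOf_eq]
    refine ⟨h1, h2, h3, ?_⟩
    intro j hj1 hj2 hj3
    have hjS : j ∈ suppIdx r₀ r a := (mem_suppIdx har hr₀r).2 ⟨hj1, hj2, hj3⟩
    have hle : FminZ q v r₀ r a β ≤ vz v (a j) + (q : ℤ) ^ j * β := Finset.inf'_le _ hjS
    rw [← hval] at hle
    have : ((vz v (a i) + (q : ℤ) ^ i * β : ℤ) : ℚ) ≤ ((vz v (a j) + (q : ℤ) ^ j * β : ℤ) : ℚ) := by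
      exact_mod_cast hle
    push_cast at this
    linarith

theorem FminZ_strictMono {q : ℕ} {v : L → WithTop ℤ} {r₀ r : ℕ} {a : ℕ → L} (hq1 : 1 ≤ q) :
    StrictMono (FminZ q v r₀ r a) := by
  intro β β' h
  obtain ⟨j, hj, hFj⟩ := Finset.exists_mem_eq_inf'
    (⟨r, Finset.mem_insert_self _ _⟩ : (suppIdx r₀ r a).Nonempty)
    (fun i => vz v (a i) + (q : ℤ) ^ i * β')
  have h0 : (0 : ℤ) < (q : ℤ) ^ j := pow_pos (by exact_mod_cast hq1) j
  calc FminZ q v r₀ r a β ≤ vz v (a j) + (q : ℤ) ^ j * β := Finset.inf'_le _ hj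
    _ < vz v (a j) + (q : ℤ) ^ j * β' := by nlinarith
    _ = FminZ q v r₀ r a β' := by rw [FminZ, hFj]

theorem stepLemma (q : ℕ) (hq2 : 2 ≤ q)
    (v : L → WithTop ℤ) (hv : IsDVal v) (π : L) (hπ : v π = 1)
    (res : L → k) (hres : IsResidue v res)
    (r₀ r : ℕ) (hr₀r : r₀ ≤ r) (hr₀1 : 1 ≤ r₀) (a : ℕ → L) (har : a r = 1)
    (x : L) (hx : x ≠ 0)
    (i₀ : ℕ) (hi₀l : r₀ ≤ i₀) (hi₀r : i₀ ≤ r) (hai₀ : a i₀ ≠ 0)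
    (hvx : (vz v x : ℚ) < -(vz v (a i₀) : ℚ) / ((q : ℚ) ^ i₀ - 1))
    (hexc : ¬ Exc q v π res r₀ r a x) :
    phiMap q r₀ r a x ≠ 0 ∧
      vz v (phiMap q r₀ r a x) = FminZ q v r₀ r a (vz v x) ∧
      (vz v (phiMap q r₀ r a x) : ℚ) < -(vz v (a i₀) : ℚ) / ((q : ℚ) ^ i₀ - 1) ∧
      vz v (phiMap q r₀ r a x) < vz v x ∧
      ac v π res (phiMap q r₀ r a x) =
        psiMap q v π res r₀ r a ((vz v x : ℚ)) (ac v π res x) := by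
  classical
  have hq1 : 1 ≤ q := by omega
  have hπ0 := hv.pi_ne_zero hπ
  set β := vz v x with hβ
  set m := FminZ q v r₀ r a β with hmdef
  set S := suppIdx r₀ r a with hS
  have hne : S.Nonempty := ⟨r, Finset.mem_insert_self _ _⟩
  set val : ℕ → ℤ := fun i => vz v (a i) + (q : ℤ) ^ i * β with hval
  -- the sum restricted to the support
  have hsum : phiMap q r₀ r a x = ∑ i ∈ S, a i * x ^ q ^ i := by
    rw [phiMap, hS, suppIdx, Finset.insert_eq_self.2
      (Finset.mem_filter.2 ⟨Finset.mem_Icc.2 ⟨hr₀r, le_refl r⟩, by rw [har]; exact one_ne_zero⟩)]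
    exact (Finset.sum_filter_of_ne fun i _ h => by
      intro ha; rw [ha, zero_mul] at h; exact h rfl).symm
  have hmemS : ∀ i ∈ S, r₀ ≤ i ∧ i ≤ r ∧ a i ≠ 0 := fun i hi => (mem_suppIdx har hr₀r).1 hi
  have hterm_ne : ∀ i ∈ S, a i * x ^ q ^ i ≠ 0 := fun i hi =>
    mul_ne_zero (hmemS i hi).2.2 (pow_ne_zero _ hx)
  have hvterm : ∀ i ∈ S, vz v (a i * x ^ q ^ i) = val i := by
    intro i hi
    rw [hv.vz_mul (hmemS i hi).2.2 (pow_ne_zero _ hx), hv.vz_pow hx]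
    simp only [hval, hβ]
    push_cast
    ring
  have hm_le : ∀ i ∈ S, m ≤ val i := fun i hi => Finset.inf'_le _ hi
  set u := π ^ (-m) with hu
  have hu0 : u ≠ 0 := zpow_ne_zero _ hπ0
  have hvu : vz v u = -m := by rw [hu, hv.vz_zpow hπ0, hv.vz_pi hπ, mul_one]
  -- valuations of the summands times u
  have hvtu : ∀ i ∈ S, v (a i * x ^ q ^ i * u) = ((val i - m : ℤ) : WithTop ℤ) := by
    intro i hi
    rw [hv.vz_spec (mul_ne_zero (hterm_ne i hi) hu0),
      hv.vz_mul (hterm_ne i hi) hu0, hvterm i hi, hvu, sub_eq_add_neg]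
  have hvtu_nonneg : ∀ i ∈ S, 0 ≤ v (a i * x ^ q ^ i * u) := by
    intro i hi
    rw [hvtu i hi]
    exact_mod_cast sub_nonneg.2 (hm_le i hi)
  -- residues of the summands
  set c : ℕ → k := fun i => ac v π res (a i) with hc
  set g := ac v π res x with hg
  have hrestu : ∀ i ∈ S, res (a i * x ^ q ^ i * u) =
      (if val i = m then c i * g ^ q ^ i else 0) := by
    intro i hi
    by_cases hvim : val i = m
    · rw [if_pos hvim]
      have : a i * x ^ q ^ i * u = a i * x ^ q ^ i * π ^ (-(vz v (a i) + ((q ^ i : ℕ) : ℤ) * vz v x)) := by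
        rw [hu]
        congr 1
        rw [← hvim]
        simp only [hval, hβ]
        push_cast
        ring
      rw [this, res_term hv hπ hres (hmemS i hi).2.2 hx (q ^ i)]
    · rw [if_neg hvim]
      refine (hres.eq_zero_iff _ (hvtu_nonneg i hi)).2 ?_
      rw [hvtu i hi]
      have : (0 : ℤ) < val i - m := by
        have := hm_le i hi
        omega
      exact_mod_cast this
  -- the Jfin characterization
  have hJeq : Jfin q v r₀ r a (β : ℚ) = S.filter fun i => val i = m := by
    ext i
    rw [mem_Jfin_int hq1 har hr₀r, Finset.mem_filter]
  -- total residue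
  have hres_total : res (phiMap q r₀ r a x * u) = psiMap q v π res r₀ r a (β : ℚ) g := by
    rw [hsum, Finset.sum_mul, hres.res_sum hv hvtu_nonneg, Finset.sum_congr rfl hrestu,
      ← Finset.sum_filter, ← hJeq, psiMap_eq_sum_Jfin]
  -- nonvanishing of the leading residue
  have hJne : (Jfin q v r₀ r a (β : ℚ)).Nonempty := by
    obtain ⟨j, hj, hFj⟩ := Finset.exists_mem_eq_inf' hne val
    exact ⟨j, hJeq ▸ Finset.mem_filter.2 ⟨hj, hFj.symm⟩⟩
  have hs_ne : psiMap q v π res r₀ r a (β : ℚ) g ≠ 0 := by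
    rcases eq_or_lt_of_le (Finset.one_le_card.2 hJne) with h1 | h1
    · -- singleton case
      obtain ⟨i, hi⟩ := Finset.card_eq_one.1 h1.symm
      rw [psiMap_eq_sum_Jfin, hi, Finset.sum_singleton]
      have hiJ : i ∈ Jfin q v r₀ r a (β : ℚ) := hi ▸ Finset.mem_singleton_self i
      rw [hJeq, Finset.mem_filter] at hiJ
      exact mul_ne_zero (ac_ne_zero hv hπ hres (hmemS i hiJ.1).2.2)
        (pow_ne_zero _ (ac_ne_zero hv hπ hres hx))
    · -- at least two indices attain the minimum
      obtain ⟨i, hi, j, hj, hij⟩ := Finset.one_lt_card.1 h1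
      -- order them
      have key : ∀ i j : ℕ, i ∈ Jfin q v r₀ r a (β : ℚ) → j ∈ Jfin q v r₀ r a (β : ℚ) →
          i < j → (β : ℚ) ∈ Pset q v r₀ r a := by
        intro i j hi hj hij
        rw [hJeq, Finset.mem_filter] at hi hj
        obtain ⟨hi1, hi2, hi3⟩ := hmemS i hi.1
        obtain ⟨hj1, hj2, hj3⟩ := hmemS j hj.1
        have hvv : val i = val j := by rw [hi.2, hj.2]
        have hpow : (q : ℚ) ^ i < (q : ℚ) ^ j := by
          have : (q : ℕ) ^ i < (q : ℕ) ^ j := Nat.pow_lt_pow_right (by omega) hij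
          exact_mod_cast this
        refine Set.mem_union_right _ ⟨i, j, hi1, hij, hj2, hi3, hj3, ?_⟩
        simp only [hval] at hvv
        have hq2' : ((vz v (a i) + (q : ℤ) ^ i * β : ℤ) : ℚ) = ((vz v (a j) + (q : ℤ) ^ j * β : ℤ) : ℚ) := by
          exact_mod_cast hvv
        push_cast at hq2'
        rw [eq_div_iff (by linarith : (q : ℚ) ^ j - (q : ℚ) ^ i ≠ 0)]
        linarith
      have hP : (β : ℚ) ∈ Pset q v r₀ r a := by
        rcases lt_or_gt_of_ne hij with h | h
        · exact key i j hi hj h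
        · exact key j i hj hi h
      have hR : g ∉ Rset q v π res r₀ r a (β : ℚ) := by
        intro hgR
        exact hexc ⟨hP, hgR⟩
      intro h0
      refine hR (Or.inr ?_)
      exact ⟨ac_ne_zero hv hπ hres hx, h0⟩
  -- conclude
  have hv_total_nonneg : 0 ≤ v (phiMap q r₀ r a x * u) := by
    rw [hsum, Finset.sum_mul]
    exact v_sum_nonneg hv hvtu_nonneg
  have hv_total : v (phiMap q r₀ r a x * u) = 0 := by
    rcases eq_or_lt_of_le hv_total_nonneg with h | h
    · exact h.symm
    · exact absurd ((hres.eq_zero_iff _ hv_total_nonneg).2 h)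
        (by rw [hres_total]; exact hs_ne)
  have hphi_ne : phiMap q r₀ r a x ≠ 0 := by
    intro h
    rw [h, zero_mul, hv.map_zero] at hv_total
    exact (by simp : (⊤ : WithTop ℤ) ≠ 0) hv_total
  have hvz_phi : vz v (phiMap q r₀ r a x) = m := by
    have h := hv_total
    rw [hv.vz_spec (mul_ne_zero hphi_ne hu0), hv.vz_mul hphi_ne hu0, hvu] at h
    have h2 : vz v (phiMap q r₀ r a x) + -m = 0 := by exact_mod_cast h
    omega
  -- the quantitative inequalities
  have hQ1 : (1 : ℚ) < (q : ℚ) ^ i₀ := by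
    have : (1 : ℕ) < q ^ i₀ := by
      calc 1 < q := by omega
        _ ≤ q ^ i₀ := Nat.le_self_pow (by omega) q
    exact_mod_cast this
  have hmle : (m : ℚ) ≤ (vz v (a i₀) : ℚ) + (q : ℚ) ^ i₀ * (β : ℚ) := by
    have h := hm_le i₀ ((mem_suppIdx har hr₀r).2 ⟨hi₀l, hi₀r, hai₀⟩)
    simp only [hval, hβ] at h
    have h2 : ((m : ℤ) : ℚ) ≤ ((vz v (a i₀) + (q : ℤ) ^ i₀ * β : ℤ) : ℚ) := by
      exact_mod_cast h
    push_cast at h2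
    linarith
  have hQpos : (0 : ℚ) < (q : ℚ) ^ i₀ - 1 := by linarith
  have hkey : ((vz v (a i₀) : ℚ)) + ((q : ℚ) ^ i₀ - 1) * (β : ℚ) < 0 := by
    rw [lt_div_iff₀ hQpos] at hvx
    linarith
  refine ⟨hphi_ne, by rw [hvz_phi], ?_, ?_, ?_⟩
  · rw [hvz_phi, lt_div_iff₀ hQpos]
    nlinarith [mul_le_mul_of_nonneg_right hmle (le_of_lt hQpos),
      mul_neg_of_pos_of_neg (by linarith : (0 : ℚ) < (q : ℚ) ^ i₀) hkey]
  · rw [hvz_phi]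
    have hmb : (m : ℚ) < (β : ℚ) := by nlinarith [hmle, hkey]
    exact_mod_cast hmb
  · have hstep : ac v π res (phiMap q r₀ r a x) = res (phiMap q r₀ r a x * u) := by
      unfold ac
      rw [hvz_phi, hu]
    rw [hstep, hres_total]

theorem pow_q_injective {k : Type*} [Field k] {q : ℕ}
    (hinj : Function.Injective fun γ : k => γ ^ q) (m : ℕ) :
    Function.Injective fun γ : k => γ ^ q ^ m := by
  induction m with
  | zero => exact fun a b h => by simpa using h
  | succ m ih =>
    have : (fun γ : k => γ ^ q ^ (m + 1)) = (fun γ : k => γ ^ q) ∘ fun γ : k => γ ^ q ^ m := by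
      funext γ
      simp [pow_succ, pow_mul]
    rw [this]
    exact hinj.comp ih

theorem fiberLemma {k : Type*} [Field k] (q r : ℕ) (hq2 : 2 ≤ q)
    (hinj : Function.Injective fun γ : k => γ ^ q)
    (c : ℕ → k) (J : Finset ℕ) (hJne : J.Nonempty) (hJr : ∀ i ∈ J, i ≤ r)
    (hJ1 : ∀ i ∈ J, 1 ≤ i) (hc : ∀ i ∈ J, c i ≠ 0) (t : k) :
    ∃ T : Finset k, T.card ≤ (if 1 < J.card then q ^ r else 1) ∧
      ∀ γ : k, ∑ i ∈ J, c i * γ ^ q ^ i = t → γ ∈ T := by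
  classical
  by_cases h1 : 1 < J.card
  · -- polynomial bound
    set P : Polynomial k :=
      (∑ i ∈ J, Polynomial.C (c i) * Polynomial.X ^ q ^ i) - Polynomial.C t with hP
    have hPcoeff : P.coeff (q ^ J.max' hJne) = c (J.max' hJne) := by
      rw [hP, Polynomial.coeff_sub, Polynomial.finset_sum_coeff]
      have hmax : J.max' hJne ∈ J := J.max'_mem hJne
      rw [Finset.sum_eq_single (J.max' hJne)]
      · rw [Polynomial.coeff_C_mul, Polynomial.coeff_X_pow, if_pos rfl,
          Polynomial.coeff_C, if_neg (by positivity), mul_one, sub_zero]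
      · intro b hb hbne
        rw [Polynomial.coeff_C_mul, Polynomial.coeff_X_pow,
          if_neg (fun h => hbne (Nat.pow_right_injective hq2 h.symm)), mul_zero]
      · intro h
        exact absurd hmax h
    have hPne : P ≠ 0 := by
      intro h
      rw [h, Polynomial.coeff_zero] at hPcoeff
      exact hc _ (J.max'_mem hJne) hPcoeff.symm
    have hPdeg : P.natDegree ≤ q ^ r := by
      rw [hP]
      refine le_trans (Polynomial.natDegree_sub_le _ _) (max_le ?_ ?_)
      · refine le_trans (Polynomial.natDegree_sum_le _ _) ?_
        rw [Finset.fold_max_le]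
        refine ⟨Nat.zero_le _, fun i hi => ?_⟩
        refine le_trans (Polynomial.natDegree_C_mul_le _ _) ?_
        rw [Polynomial.natDegree_X_pow]
        exact Nat.pow_le_pow_right (by omega) (hJr i hi)
      · simp
    refine ⟨P.roots.toFinset, ?_, ?_⟩
    · rw [if_pos h1]
      exact le_trans (Multiset.toFinset_card_le _) (le_trans (Polynomial.card_roots' P) hPdeg)
    · intro γ hγ
      rw [Multiset.mem_toFinset, Polynomial.mem_roots hPne]
      rw [Polynomial.IsRoot, hP, Polynomial.eval_sub, Polynomial.eval_finset_sum]
      simp only [Polynomial.eval_mul, Polynomial.eval_C, Polynomial.eval_pow, Polynomial.eval_X]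
      rw [hγ, sub_self]
  · -- singleton case
    obtain ⟨i, hi⟩ := Finset.card_eq_one.1 (le_antisymm (not_lt.1 h1) (Finset.one_le_card.2 hJne))
    by_cases hex : ∃ γ0 : k, c i * γ0 ^ q ^ i = t
    · obtain ⟨γ0, hγ0⟩ := hex
      refine ⟨{γ0}, by rw [if_neg h1, Finset.card_singleton], ?_⟩
      intro γ hγ
      rw [hi, Finset.sum_singleton] at hγ
      rw [Finset.mem_singleton]
      refine pow_q_injective hinj i ?_
      have := hγ.trans hγ0.symm
      exact mul_left_cancel₀ (hc i (hi ▸ Finset.mem_singleton_self i)) this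
    · refine ⟨∅, by simp, ?_⟩
      intro γ hγ
      rw [hi, Finset.sum_singleton] at hγ
      exact absurd ⟨γ, hγ⟩ hex

theorem pairs_card_le (q : ℕ) (v : L → WithTop ℤ) (r₀ r : ℕ) (a : ℕ → L) (hr₀1 : 1 ≤ r₀) :
    ((((Finset.Icc r₀ r) ×ˢ (Finset.Icc r₀ r)).filter fun p : ℕ × ℕ => p.1 < p.2).card)
      ≤ r.choose 2 := by
  classical
  have hmap : ∀ p : ℕ × ℕ,
      p ∈ ((Finset.Icc r₀ r) ×ˢ (Finset.Icc r₀ r)).filter (fun p : ℕ × ℕ => p.1 < p.2) →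
      ({p.1, p.2} : Finset ℕ) ∈ (Finset.Icc 1 r).powersetCard 2 := by
    intro p hp
    simp only [Finset.mem_filter, Finset.mem_product, Finset.mem_Icc] at hp
    rw [Finset.mem_powersetCard]
    constructor
    · intro y hy
      simp only [Finset.mem_insert, Finset.mem_singleton] at hy
      rcases hy with rfl | rfl <;> rw [Finset.mem_Icc] <;> omega
    · rw [Finset.card_insert_of_notMem (by
        rw [Finset.mem_singleton]; omega), Finset.card_singleton]
  have hinj : Set.InjOn (fun p : ℕ × ℕ => ({p.1, p.2} : Finset ℕ))
      (((Finset.Icc r₀ r) ×ˢ (Finset.Icc r₀ r)).filter fun p : ℕ × ℕ => p.1 < p.2) := by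
    intro p hp p' hp' hpp
    simp only [Finset.coe_filter, Set.mem_setOf_eq] at hp hp'
    simp only at hpp
    have h1 : p.1 ∈ ({p'.1, p'.2} : Finset ℕ) := by rw [← hpp]; simp
    have h2 : p.2 ∈ ({p'.1, p'.2} : Finset ℕ) := by rw [← hpp]; simp
    have h3 : p'.1 ∈ ({p.1, p.2} : Finset ℕ) := by rw [hpp]; simp
    simp only [Finset.mem_insert, Finset.mem_singleton] at h1 h2 h3
    have hlt := hp.2
    have hlt' := hp'.2
    have : p.1 = p'.1 ∧ p.2 = p'.2 := by omega
    exact Prod.ext this.1 this.2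
  have := Finset.card_le_card_of_injOn _ hmap hinj
  refine le_trans this ?_
  rw [Finset.card_powersetCard, Nat.card_Icc]
  simp

/-- The angular-component part of Lemma 2.13: if `r₀ ≥ 1`, then for each `n ≥ 1` and each
value `(αₙ, γₙ)` of `(v(φⁿ(x)), ac(φⁿ(x)))`, the angular component of `x` lies in a set of
at most `q^(r·C(r,2))` elements, uniformly in `n`, provided `v(x) < N_v` and no iterate
`φᵏ(x)`, `k < n`, is zero or exceptional. -/
theorem statement10
    (p q : ℕ) (hp : p.Prime) (hq : ∃ s : ℕ, 0 < s ∧ q = p ^ s)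
    [CharP L p] (F : Subfield L) (hF : Nat.card F = q)
    (v : L → WithTop ℤ) (hv : IsDVal v)
    (π : L) (hπ : v π = 1) (res : L → k) (hres : IsResidue v res)
    (r₀ r : ℕ) (hr1 : 1 ≤ r) (hr₀r : r₀ ≤ r) (hr₀1 : 1 ≤ r₀)
    (a : ℕ → L) (har₀ : a r₀ ≠ 0) (har : a r = 1)
    (n : ℕ) (hn : 1 ≤ n) (αn : ℤ) (γn : k) :
    ∃ T : Finset k, T.card ≤ q ^ (r * Nat.choose r 2) ∧
      ∀ x : L, x ≠ 0 →
        (∃ i ∈ Finset.Icc r₀ r, a i ≠ 0 ∧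
          (vz v x : ℚ) < -(vz v (a i) : ℚ) / ((q : ℚ) ^ i - 1)) →
        (∀ j : ℕ, j < n → (phiMap q r₀ r a)^[j] x ≠ 0 ∧
          ¬ Exc q v π res r₀ r a ((phiMap q r₀ r a)^[j] x)) →
        v ((phiMap q r₀ r a)^[n] x) = (αn : WithTop ℤ) →
        ac v π res ((phiMap q r₀ r a)^[n] x) = γn →
        ac v π res x ∈ T := by
  classical
  obtain ⟨s₀, hs₀, hqs⟩ := hq
  have hq2 : 2 ≤ q := by
    rw [hqs]
    calc 2 ≤ p := hp.two_le
      _ ≤ p ^ s₀ := Nat.le_self_pow (by omega) p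
  have hq1 : 1 ≤ q := by omega
  -- the residue field has characteristic p
  have hpk : (p : k) = 0 := by
    have h1 : ((p : ℕ) : L) = 0 := CharP.cast_eq_zero L p
    have h2 := hres.res_natCast hv p
    rw [h1, hres.res_zero hv] at h2
    exact h2.symm
  haveI hck : CharP k p := (CharP.charP_iff_prime_eq_zero hp).mpr hpk
  haveI hfp : Fact p.Prime := ⟨hp⟩
  have hinj : Function.Injective fun γ : k => γ ^ q := by
    intro x y hxy
    simp only at hxy
    rw [hqs] at hxy
    have h3 : (x - y) ^ p ^ s₀ = 0 := by rw [sub_pow_char_pow, hxy, sub_self]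
    have h4 : x - y = 0 := (pow_eq_zero_iff (pow_pos hp.pos s₀).ne').1 h3
    exact sub_eq_zero.1 h4
  set φ := phiMap q r₀ r a with hφ
  by_cases hex : ∃ x : L, x ≠ 0 ∧
      (∃ i ∈ Finset.Icc r₀ r, a i ≠ 0 ∧
        (vz v x : ℚ) < -(vz v (a i) : ℚ) / ((q : ℚ) ^ i - 1)) ∧
      (∀ j : ℕ, j < n → φ^[j] x ≠ 0 ∧ ¬ Exc q v π res r₀ r a (φ^[j] x)) ∧
      v (φ^[n] x) = (αn : WithTop ℤ) ∧ ac v π res (φ^[n] x) = γn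
  case neg =>
    refine ⟨∅, by simp, ?_⟩
    intro x h1 h2 h3 h4 h5
    exact absurd ⟨x, h1, h2, h3, h4, h5⟩ hex
  obtain ⟨x₀, hx₀1, hx₀2, hx₀3, hx₀4, hx₀5⟩ := hex
  -- orbit facts
  have orbit : ∀ x : L, x ≠ 0 →
      (∃ i ∈ Finset.Icc r₀ r, a i ≠ 0 ∧
        (vz v x : ℚ) < -(vz v (a i) : ℚ) / ((q : ℚ) ^ i - 1)) →
      (∀ j : ℕ, j < n → φ^[j] x ≠ 0 ∧ ¬ Exc q v π res r₀ r a (φ^[j] x)) →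
      ∀ m, m ≤ n → φ^[m] x ≠ 0 ∧
        (∃ i ∈ Finset.Icc r₀ r, a i ≠ 0 ∧
          (vz v (φ^[m] x) : ℚ) < -(vz v (a i) : ℚ) / ((q : ℚ) ^ i - 1)) := by
    intro x hx hw hall m
    induction m with
    | zero =>
      intro _
      exact ⟨by simpa using hx, by simpa using hw⟩
    | succ m ih =>
      intro hm1
      obtain ⟨hne, i, hi, hai, hlt⟩ := ih (by omega)
      have hst := stepLemma q hq2 v hv π hπ res hres r₀ r hr₀r hr₀1 a har (φ^[m] x) hne
        i (Finset.mem_Icc.1 hi).1 (Finset.mem_Icc.1 hi).2 hai hlt (hall m (by omega)).2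
      rw [Function.iterate_succ_apply']
      exact ⟨hst.1, ⟨i, hi, hai, hst.2.2.1⟩⟩
  have stepfacts : ∀ x : L, x ≠ 0 →
      (∃ i ∈ Finset.Icc r₀ r, a i ≠ 0 ∧
        (vz v x : ℚ) < -(vz v (a i) : ℚ) / ((q : ℚ) ^ i - 1)) →
      (∀ j : ℕ, j < n → φ^[j] x ≠ 0 ∧ ¬ Exc q v π res r₀ r a (φ^[j] x)) →
      ∀ m, m < n →
        vz v (φ^[m + 1] x) = FminZ q v r₀ r a (vz v (φ^[m] x)) ∧
        vz v (φ^[m + 1] x) < vz v (φ^[m] x) ∧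
        ac v π res (φ^[m + 1] x) =
          psiMap q v π res r₀ r a ((vz v (φ^[m] x) : ℚ)) (ac v π res (φ^[m] x)) := by
    intro x hx hw hall m hm
    obtain ⟨hne, i, hi, hai, hlt⟩ := orbit x hx hw hall m (by omega)
    have hst := stepLemma q hq2 v hv π hπ res hres r₀ r hr₀r hr₀1 a har (φ^[m] x) hne
      i (Finset.mem_Icc.1 hi).1 (Finset.mem_Icc.1 hi).2 hai hlt (hall m hm).2
    rw [Function.iterate_succ_apply']
    exact ⟨hst.2.1, hst.2.2.2.1, hst.2.2.2.2⟩
  have hvzn : ∀ x : L, v (φ^[n] x) = (αn : WithTop ℤ) → vz v (φ^[n] x) = αn := by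
    intro x hx
    rw [vz, hx]
    rfl
  -- uniqueness of the valuation sequence
  have huniq : ∀ x : L, x ≠ 0 →
      (∃ i ∈ Finset.Icc r₀ r, a i ≠ 0 ∧
        (vz v x : ℚ) < -(vz v (a i) : ℚ) / ((q : ℚ) ^ i - 1)) →
      (∀ j : ℕ, j < n → φ^[j] x ≠ 0 ∧ ¬ Exc q v π res r₀ r a (φ^[j] x)) →
      v (φ^[n] x) = (αn : WithTop ℤ) →
      ∀ m, m ≤ n → vz v (φ^[m] x) = vz v (φ^[m] x₀) := by
    intro x hx hw hall hvn
    have key : ∀ d m, m + d = n → vz v (φ^[m] x) = vz v (φ^[m] x₀) := by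
      intro d
      induction d with
      | zero =>
        intro m hm
        rw [show m = n by omega, hvzn x hvn, hvzn x₀ hx₀4]
      | succ d ih =>
        intro m hm
        have h1 := (stepfacts x hx hw hall m (by omega)).1
        have h2 := (stepfacts x₀ hx₀1 hx₀2 hx₀3 m (by omega)).1
        have h3 := ih (m + 1) (by omega)
        rw [h1, h2] at h3
        exact (FminZ_strictMono (q := q) (v := v) (r₀ := r₀) (r := r) (a := a) hq1).injective h3
    intro m hm
    exact key (n - m) m (by omega)
  set β : ℕ → ℤ := fun j => vz v (φ^[j] x₀) with hβ
  -- fiber finsets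
  have hJne : ∀ j : ℕ, (Jfin q v r₀ r a ((β j : ℚ))).Nonempty := by
    intro j
    obtain ⟨i, hi, hFi⟩ := Finset.exists_mem_eq_inf'
      (⟨r, Finset.mem_insert_self _ _⟩ : (suppIdx r₀ r a).Nonempty)
      (fun i => vz v (a i) + (q : ℤ) ^ i * (β j))
    exact ⟨i, (mem_Jfin_int hq1 har hr₀r (β j)).2 ⟨hi, hFi.symm⟩⟩
  have hJsub : ∀ j : ℕ, ∀ i ∈ Jfin q v r₀ r a ((β j : ℚ)), 1 ≤ i ∧ i ≤ r ∧ a i ≠ 0 := by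
    intro j i hi
    obtain ⟨hiS, _⟩ := (mem_Jfin_int hq1 har hr₀r (β j)).1 hi
    obtain ⟨h1, h2, h3⟩ := (mem_suppIdx har hr₀r).1 hiS
    exact ⟨le_trans hr₀1 h1, h2, h3⟩
  choose fib hfibcard hfibspec using fun (j : ℕ) (t : k) =>
    fiberLemma q r hq2 hinj (fun i => ac v π res (a i)) (Jfin q v r₀ r a ((β j : ℚ)))
      (hJne j) (fun i hi => (hJsub j i hi).2.1) (fun i hi => (hJsub j i hi).1)
      (fun i hi => ac_ne_zero hv hπ hres (hJsub j i hi).2.2) t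
  set w : ℕ → ℕ :=
    fun j => if 1 < (Jfin q v r₀ r a ((β j : ℚ))).card then q ^ r else 1 with hwdef
  set B : ℕ → Finset k :=
    fun m => Nat.rec ({γn} : Finset k) (fun m' Tm => Tm.biUnion (fib (n - 1 - m'))) m with hB
  have hBzero : B 0 = {γn} := rfl
  have hBsucc : ∀ m, B (m + 1) = (B m).biUnion (fib (n - 1 - m)) := fun m => rfl
  have hBcard : ∀ m, (B m).card ≤ ∏ j ∈ Finset.range m, w (n - 1 - j) := by
    intro m
    induction m with
    | zero => rw [hBzero]; simp
    | succ m ih =>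
      rw [hBsucc m, Finset.prod_range_succ]
      refine le_trans (Finset.card_biUnion_le_card_mul _ _ (w (n - 1 - m))
        fun t _ => hfibcard (n - 1 - m) t) ?_
      exact Nat.mul_le_mul_right _ ih
  have hmem : ∀ x : L, x ≠ 0 →
      (∃ i ∈ Finset.Icc r₀ r, a i ≠ 0 ∧
        (vz v x : ℚ) < -(vz v (a i) : ℚ) / ((q : ℚ) ^ i - 1)) →
      (∀ j : ℕ, j < n → φ^[j] x ≠ 0 ∧ ¬ Exc q v π res r₀ r a (φ^[j] x)) →
      v (φ^[n] x) = (αn : WithTop ℤ) →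
      ac v π res (φ^[n] x) = γn →
      ∀ m, m ≤ n → ac v π res (φ^[n - m] x) ∈ B m := by
    intro x hx hw hall hvn hacn m
    induction m with
    | zero =>
      intro _
      rw [hBzero, Nat.sub_zero, Finset.mem_singleton]
      exact hacn
    | succ m ih =>
      intro hm1
      rw [hBsucc m, Finset.mem_biUnion]
      refine ⟨ac v π res (φ^[n - m] x), ih (by omega), ?_⟩
      have hfact := (stepfacts x hx hw hall (n - m - 1) (by omega)).2.2
      have harith : n - m - 1 + 1 = n - m := by omega
      rw [harith] at hfact
      have hvzeq : vz v (φ^[n - m - 1] x) = β (n - m - 1) := by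
        simp only [hβ]
        exact huniq x hx hw hall hvn (n - m - 1) (by omega)
      rw [hvzeq, show n - m - 1 = n - 1 - m by omega] at hfact
      refine hfibspec (n - 1 - m) _ _ ?_
      rw [← psiMap_eq_sum_Jfin, show n - (m + 1) = n - 1 - m by omega]
      exact hfact.symm
  refine ⟨B n, ?_, ?_⟩
  · refine le_trans (hBcard n) ?_
    rw [Finset.prod_range_reflect]
    have hprod : ∏ j ∈ Finset.range n, w j = (q ^ r) ^
        (((Finset.range n).filter fun j => 1 < (Jfin q v r₀ r a ((β j : ℚ))).card).card) := by
      simp only [hwdef]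
      rw [Finset.prod_ite, Finset.prod_const, Finset.prod_const_one, mul_one]
    rw [hprod]
    have hβdec : ∀ j j' : ℕ, j < j' → j' ≤ n → β j' < β j := by
      intro j j'
      induction j' with
      | zero => intro h _; omega
      | succ j' ih =>
        intro hjj' hj'
        have hst := (stepfacts x₀ hx₀1 hx₀2 hx₀3 j' (by omega)).2.1
        have hst' : β (j' + 1) < β j' := by simp only [hβ]; exact hst
        rcases Nat.lt_succ_iff_lt_or_eq.1 hjj' with h | h
        · exact lt_trans hst' (ih h (by omega))
        · rw [h]; exact hst'
    have hD : (((Finset.range n).filter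
        fun j => 1 < (Jfin q v r₀ r a ((β j : ℚ))).card).card) ≤ r.choose 2 := by
      have hmaps : ∀ j ∈ (Finset.range n).filter
          (fun j => 1 < (Jfin q v r₀ r a ((β j : ℚ))).card),
          ((β j : ℚ)) ∈ (((Finset.Icc r₀ r) ×ˢ (Finset.Icc r₀ r)).filter
            (fun p : ℕ × ℕ => p.1 < p.2)).image (fun p : ℕ × ℕ =>
              ((vz v (a p.1) : ℚ) - (vz v (a p.2) : ℚ)) /
                ((q : ℚ) ^ p.2 - (q : ℚ) ^ p.1)) := by
        intro j hj
        rw [Finset.mem_filter] at hj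
        have key : ∀ i i' : ℕ, i ∈ Jfin q v r₀ r a ((β j : ℚ)) →
            i' ∈ Jfin q v r₀ r a ((β j : ℚ)) → i < i' →
            ((β j : ℚ)) ∈ (((Finset.Icc r₀ r) ×ˢ (Finset.Icc r₀ r)).filter
              (fun p : ℕ × ℕ => p.1 < p.2)).image (fun p : ℕ × ℕ =>
                ((vz v (a p.1) : ℚ) - (vz v (a p.2) : ℚ)) /
                  ((q : ℚ) ^ p.2 - (q : ℚ) ^ p.1)) := by
          intro i i' hi hi' hlt
          obtain ⟨hiS, hieq⟩ := (mem_Jfin_int hq1 har hr₀r (β j)).1 hi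
          obtain ⟨hi'S, hi'eq⟩ := (mem_Jfin_int hq1 har hr₀r (β j)).1 hi'
          obtain ⟨hb1, hb2, hb3⟩ := (mem_suppIdx har hr₀r).1 hiS
          obtain ⟨hb1', hb2', hb3'⟩ := (mem_suppIdx har hr₀r).1 hi'S
          rw [Finset.mem_image]
          refine ⟨(i, i'), ?_, ?_⟩
          · rw [Finset.mem_filter, Finset.mem_product]
            exact ⟨⟨Finset.mem_Icc.2 ⟨hb1, hb2⟩, Finset.mem_Icc.2 ⟨hb1', hb2'⟩⟩, hlt⟩
          · have hvv : vz v (a i) + (q : ℤ) ^ i * (β j) =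
                vz v (a i') + (q : ℤ) ^ i' * (β j) := by rw [hieq, hi'eq]
            have hpow : (q : ℚ) ^ i < (q : ℚ) ^ i' := by
              exact_mod_cast Nat.pow_lt_pow_right (by omega) hlt
            have hvq : ((vz v (a i) + (q : ℤ) ^ i * (β j) : ℤ) : ℚ) =
                ((vz v (a i') + (q : ℤ) ^ i' * (β j) : ℤ) : ℚ) := by exact_mod_cast hvv
            push_cast at hvq
            rw [div_eq_iff (by linarith : (q : ℚ) ^ i' - (q : ℚ) ^ i ≠ 0)]
            linarith
        obtain ⟨i, hi, i', hi', hii'⟩ := Finset.one_lt_card.1 hj.2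
        rcases lt_or_gt_of_ne hii' with h | h
        · exact key i i' hi hi' h
        · exact key i' i hi' hi h
      have hinj2 : Set.InjOn (fun j => ((β j : ℚ)))
          ((Finset.range n).filter fun j => 1 < (Jfin q v r₀ r a ((β j : ℚ))).card) := by
        intro j hj j' hj' hjj
        simp only [Finset.coe_filter, Set.mem_setOf_eq, Finset.mem_range] at hj hj'
        simp only at hjj
        have heq : β j = β j' := by exact_mod_cast hjj
        by_contra hne2
        rcases lt_or_gt_of_ne hne2 with h | h
        · exact absurd heq (ne_of_gt (hβdec j j' h (by omega)))
        · exact absurd heq (ne_of_lt (hβdec j' j h (by omega)))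
      refine le_trans (Finset.card_le_card_of_injOn _ hmaps hinj2) ?_
      exact le_trans Finset.card_image_le (pairs_card_le q v r₀ r a hr₀1)
    calc (q ^ r) ^ (((Finset.range n).filter
          fun j => 1 < (Jfin q v r₀ r a ((β j : ℚ))).card).card)
        ≤ (q ^ r) ^ r.choose 2 := Nat.pow_le_pow_right (Nat.one_le_pow _ _ (by omega)) hD
      _ = q ^ (r * r.choose 2) := by rw [← pow_mul]
  · intro x h1 h2 h3 h4 h5
    have := hmem x h1 h2 h3 h4 h5 n (le_refl n)
    simpa using this

end Drinfeld
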